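/- With the same setup, j^*(I) = I'' and I'' = { α'' a morphism of T'' | j_!(α'') ∈ I }, where I = { α | i^*(α) ∈ I', j^*(α) ∈ I'' }. -/
import Mathlib


open CategoryTheory Category Limits

/-- A class of morphisms in a category. -/
abbrev MorphismClass (C : Type*) [Category C] := ∀ ⦃X Y : C⦄, (X ⟶ Y) → Prop

/-- An ideal of a preadditive category: an additive subgroup of each Hom-group, closed
under arbitrary pre- and post-composition. -/
structure CatIdeal (C : Type*) [Category C] [Preadditive C] where
  mem : MorphismClass C
  zero_mem : ∀ (X Y : C), mem (0 : X ⟶ Y)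
  neg_mem : ∀ ⦃X Y : C⦄ ⦃f : X ⟶ Y⦄, mem f → mem (-f)
  add_mem : ∀ ⦃X Y : C⦄ ⦃f g : X ⟶ Y⦄, mem f → mem g → mem (f + g)
  comp_mem : ∀ ⦃W X Y Z : C⦄ (h : W ⟶ X) ⦃f : X ⟶ Y⦄ (k : Y ⟶ Z),
    mem f → mem (h ≫ f ≫ k)

/-- The image ideal `F(I)`: all morphisms of the form `g ≫ F(α) ≫ h` with `α ∈ I`. -/
def imageMem {C D : Type*} [Category C] [Category D] (F : C ⥤ D)
    (I : MorphismClass C) : MorphismClass D :=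
  fun A B f => ∃ (X Y : C) (α : X ⟶ Y) (g : A ⟶ F.obj X) (h : F.obj Y ⟶ B),
    I α ∧ f = g ≫ F.map α ≫ h

/-- The glued morphism class `I = {α | i^*(α) ∈ I', j^*(α) ∈ I''}`. -/
def glueMem {T' T T'' : Type*} [Category T'] [Category T] [Category T'']
    [Preadditive T'] [Preadditive T'']
    (iUpper : T ⥤ T') (jUpper : T ⥤ T'')
    (I' : CatIdeal T') (I'' : CatIdeal T'') : MorphismClass T :=
  fun _ _ f => I'.mem (iUpper.map f) ∧ I''.mem (jUpper.map f)

/-- With `I = {α | i^*(α) ∈ I', j^*(α) ∈ I''}`, one has `j^*(I) = I''` (image ideal) and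
`I'' = {α'' | j_!(α'') ∈ I}`. -/
theorem stmt4 {T' T T'' : Type*} [Category T'] [Category T] [Category T'']
    [Preadditive T'] [Preadditive T] [Preadditive T'']
    (iStar : T' ⥤ T) (iUpper : T ⥤ T') (jShriek : T'' ⥤ T) (jUpper : T ⥤ T'')
    [iStar.Additive] [iUpper.Additive] [jShriek.Additive] [jUpper.Additive]
    (e₁ : iStar ⋙ iUpper ≅ 𝟭 T') (e₂ : jShriek ⋙ jUpper ≅ 𝟭 T'')
    (h₁ : ∀ X : T', IsZero (jUpper.obj (iStar.obj X)))
    (h₂ : ∀ X : T'', IsZero (iUpper.obj (jShriek.obj X)))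
    (I' : CatIdeal T') (I'' : CatIdeal T'') :
    (∀ ⦃X Y : T''⦄ (f : X ⟶ Y),
        imageMem jUpper (glueMem iUpper jUpper I' I'') f ↔ I''.mem f) ∧
    (∀ ⦃X Y : T''⦄ (f : X ⟶ Y),
        I''.mem f ↔ glueMem iUpper jUpper I' I'' (jShriek.map f)) := by
  have key : ∀ ⦃X Y : T''⦄ (f : X ⟶ Y),
      jUpper.map (jShriek.map f) = e₂.hom.app X ≫ f ≫ e₂.inv.app Y := by
    intro X Y f
    have := e₂.hom.naturality f
    simp only [Functor.comp_map, Functor.id_map] at this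
    rw [← assoc, ← this]; simp
  have mem2 : ∀ ⦃X Y : T''⦄ (f : X ⟶ Y),
      I''.mem f ↔ glueMem iUpper jUpper I' I'' (jShriek.map f) := by
    intro X Y f
    constructor
    · intro hf
      constructor
      · have : iUpper.map (jShriek.map f) = 0 := (h₂ X).eq_of_src _ _
        rw [this]; exact I'.zero_mem _ _
      · rw [key]; exact I''.comp_mem _ _ hf
    · rintro ⟨-, hf⟩
      have := I''.comp_mem (e₂.inv.app X) (e₂.hom.app Y) hf
      rw [key] at this
      simpa using this
  refine ⟨?_, mem2⟩
  intro X Y f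
  constructor
  · rintro ⟨A, B, α, g, h, ⟨-, hα⟩, rfl⟩
    exact I''.comp_mem _ _ hα
  · intro hf
    refine ⟨jShriek.obj X, jShriek.obj Y, jShriek.map f, e₂.inv.app X, e₂.hom.app Y,
      (mem2 f).1 hf, ?_⟩
    rw [key]; simp
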